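/- Geometric tail bound for the stationary distribution from drift conditions (Lemma 2.3, first part). Let X be a countable set, P a Markov transition kernel on X (P(x) is a probability distribution on X for each x), and Z : X → ℝ_{≥0}. Assume: (C1) there exist η > 0 and κ < ∞ such that for all x with Z(x) ≥ κ, ∑_{y} P(x)(y)·Z(y) − Z(x) ≤ −η; (C2) there exists D < ∞ such that |Z(y) − Z(x)| ≤ D whenever P(x)(y) > 0. Let π be a probability distribution on X invariant for P (π = πP). Then for every integer m ≥ 0: π({x : Z(x) > κ + 2Dm}) ≤ (D/(D+η))^{m+1}. -/

import Mathlib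

open scoped ENNReal


private lemma phi_lip {D : ℝ} (L c a b : ℝ) (hc : 0 ≤ c) (hd : |a - b| ≤ D) :
    min (max (a - L) 0) c ≤ min (max (b - L) 0) c + D := by
  have h1 := le_abs_self (a - b)
  have h2 := neg_abs_le (a - b)
  simp only [min_def, max_def]
  split_ifs <;> linarith

private lemma stat_id {X : Type*} (P : X → X → ℝ≥0∞) (pd : X → ℝ≥0∞)
    (hpd2 : ∀ y, (∑' x, pd x * P x y) = pd y) (g : X → ℝ≥0∞) :
    (∑' x, pd x * ∑' y, P x y * g y) = ∑' x, pd x * g x := by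
  calc (∑' x, pd x * ∑' y, P x y * g y)
      = ∑' x, ∑' y, pd x * P x y * g y := by
        simp_rw [← ENNReal.tsum_mul_left, mul_assoc]
    _ = ∑' y, ∑' x, pd x * P x y * g y := ENNReal.tsum_comm
    _ = ∑' y, (∑' x, pd x * P x y) * g y := by simp_rw [ENNReal.tsum_mul_right]
    _ = ∑' x, pd x * g x := by simp_rw [hpd2]

private lemma ind_mul {X : Type*} (s : Set X) (pd : X → ℝ≥0∞) (a : ℝ≥0∞) (x : X) :
    pd x * s.indicator (fun _ => a) x = a * s.indicator pd x := by
  classical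
  by_cases hx : x ∈ s <;> simp [hx, mul_comm]

private lemma drift_shift {X : Type*} (P : X → ℝ≥0∞) (hP : (∑' y, P y) = 1)
    (W : X → ℝ) (hW0 : ∀ y, 0 ≤ W y) (L η w : ℝ)
    (hsupp : ∀ y, P y ≠ 0 → L ≤ W y) (hwL : L ≤ w) (hw0 : 0 ≤ w)
    (h : (∑' y, P y * ENNReal.ofReal (W y)) + ENNReal.ofReal η ≤ ENNReal.ofReal w) :
    (∑' y, P y * ENNReal.ofReal (W y - L)) + ENNReal.ofReal η ≤ ENNReal.ofReal (w - L) := by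
  rcases le_or_gt 0 L with hL | hL
  · have key : ∀ y, P y * ENNReal.ofReal (W y - L) + P y * ENNReal.ofReal L
        = P y * ENNReal.ofReal (W y) := by
      intro y
      by_cases hy : P y = 0
      · simp [hy]
      · rw [← mul_add, ← ENNReal.ofReal_add (by linarith [hsupp y hy]) hL, sub_add_cancel]
    have h2 : (∑' y, P y * ENNReal.ofReal (W y - L)) + ENNReal.ofReal L
        = ∑' y, P y * ENNReal.ofReal (W y) := by
      calc (∑' y, P y * ENNReal.ofReal (W y - L)) + ENNReal.ofReal L
          = (∑' y, P y * ENNReal.ofReal (W y - L)) + (∑' y, P y) * ENNReal.ofReal L := by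
            rw [hP, one_mul]
        _ = ∑' y, (P y * ENNReal.ofReal (W y - L) + P y * ENNReal.ofReal L) := by
            rw [ENNReal.tsum_add, ENNReal.tsum_mul_right]
        _ = _ := tsum_congr key
    rw [← ENNReal.add_le_add_iff_right (show ENNReal.ofReal L ≠ ⊤ from ENNReal.ofReal_ne_top)]
    calc (∑' y, P y * ENNReal.ofReal (W y - L)) + ENNReal.ofReal η + ENNReal.ofReal L
        = ((∑' y, P y * ENNReal.ofReal (W y - L)) + ENNReal.ofReal L) + ENNReal.ofReal η := by
          ring
      _ = (∑' y, P y * ENNReal.ofReal (W y)) + ENNReal.ofReal η := by rw [h2]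
      _ ≤ ENNReal.ofReal w := h
      _ = ENNReal.ofReal (w - L) + ENNReal.ofReal L := by
          rw [← ENNReal.ofReal_add (by linarith) hL, sub_add_cancel]
  · have key : ∀ y, P y * ENNReal.ofReal (W y - L)
        = P y * ENNReal.ofReal (W y) + P y * ENNReal.ofReal (-L) := by
      intro y
      rw [← mul_add, ← ENNReal.ofReal_add (hW0 y) (by linarith), ← sub_eq_add_neg]
    calc (∑' y, P y * ENNReal.ofReal (W y - L)) + ENNReal.ofReal η
        = ((∑' y, P y * ENNReal.ofReal (W y)) + (∑' y, P y) * ENNReal.ofReal (-L))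
            + ENNReal.ofReal η := by
          rw [tsum_congr key, ENNReal.tsum_add, ENNReal.tsum_mul_right]
      _ = ((∑' y, P y * ENNReal.ofReal (W y)) + ENNReal.ofReal η) + ENNReal.ofReal (-L) := by
          rw [hP, one_mul]; ring
      _ ≤ ENNReal.ofReal w + ENNReal.ofReal (-L) := add_le_add_left h _
      _ = ENNReal.ofReal (w - L) := by
          rw [← ENNReal.ofReal_add hw0 (by linarith), ← sub_eq_add_neg]

private lemma key_ineq {X : Type*}
    (P : X → X → ℝ≥0∞) (hP : ∀ x, (∑' y, P x y) = 1)
    (Z : X → ℝ) (hZ0 : ∀ x, 0 ≤ Z x)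
    (η κ D : ℝ) (hη : 0 < η) (hD : 0 < D)
    (hC1 : ∀ x, κ ≤ Z x →
      (∑' y, P x y * ENNReal.ofReal (Z y)) + ENNReal.ofReal η ≤ ENNReal.ofReal (Z x))
    (hC2 : ∀ x y, P x y ≠ 0 → |Z y - Z x| ≤ D)
    (pd : X → ℝ≥0∞) (hpd1 : (∑' x, pd x) = 1)
    (hpd2 : ∀ y, (∑' x, pd x * P x y) = pd y)
    (L : ℝ) (hL : κ - D ≤ L) :
    ENNReal.ofReal η * (∑' x, Set.indicator {x | L + D < Z x} pd x)
      ≤ ENNReal.ofReal D * (∑' x, Set.indicator {x | L - D < Z x ∧ Z x ≤ L + D} pd x) := by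
  classical
  set B : ℝ≥0∞ := ∑' x, Set.indicator {x | L - D < Z x ∧ Z x ≤ L + D} pd x with hBdef
  set T : ℝ≥0∞ := ∑' x, Set.indicator {x | L + D < Z x} pd x with hTdef
  have main : ∀ n : ℕ,
      ENNReal.ofReal η * T ≤ ENNReal.ofReal D * B
        + ENNReal.ofReal (D + η) * (∑' x, Set.indicator {x | L + D + n < Z x} pd x) := by
    intro n
    set c : ℝ := 2 * D + n with hc
    have hn0 : (0:ℝ) ≤ n := Nat.cast_nonneg n
    have hc0 : 0 ≤ c := by positivity
    set φ : ℝ → ℝ := fun z => min (max (z - L) 0) c with hφ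
    have hφ0 : ∀ z, 0 ≤ φ z := fun z => le_min (le_max_right _ _) hc0
    have hφc : ∀ z, φ z ≤ c := fun z => min_le_right _ _
    set g : X → ℝ≥0∞ := fun x => ENNReal.ofReal (φ (Z x)) with hg
    set M : ℝ≥0∞ := ∑' x, Set.indicator {x | L + D < Z x ∧ Z x ≤ L + D + n} pd x with hM
    set Tt : ℝ≥0∞ := ∑' x, Set.indicator {x | L + D + n < Z x} pd x with hTt
    -- pointwise drift estimate
    have pointwise : ∀ x,
        (∑' y, P x y * g y)
            + Set.indicator {x | L + D < Z x ∧ Z x ≤ L + D + n} (fun _ => ENNReal.ofReal η) x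
          ≤ g x + Set.indicator {x | (L - D < Z x ∧ Z x ≤ L + D) ∨ L + D + n < Z x}
              (fun _ => ENNReal.ofReal D) x := by
      intro x
      by_cases hx1 : Z x ≤ L - D
      · have hgx : g x = 0 := by
          simp only [hg, hφ]
          rw [max_eq_right (by linarith), min_eq_left hc0, ENNReal.ofReal_zero]
        have hE : (∑' y, P x y * g y) = 0 := by
          rw [ENNReal.tsum_eq_zero]
          intro y
          by_cases hy : P x y = 0
          · simp [hy]
          · have h2 := abs_le.mp (hC2 x y hy)
            have hgy : g y = 0 := by
              simp only [hg, hφ]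
              rw [max_eq_right (by linarith [h2.1, h2.2]), min_eq_left hc0,
                ENNReal.ofReal_zero]
            simp [hgy]
        have hmid : x ∉ {x : X | L + D < Z x ∧ Z x ≤ L + D + n} := by
          intro hx; exact absurd hx.1 (by linarith)
        rw [hE, hgx, Set.indicator_of_notMem hmid, add_zero, zero_add]
        exact zero_le
      · push_neg at hx1
        by_cases hx2 : x ∈ {x : X | L + D < Z x ∧ Z x ≤ L + D + n}
        · obtain ⟨hxa, hxb⟩ := hx2
          have hκx : κ ≤ Z x := by linarith
          have hgx : g x = ENNReal.ofReal (Z x - L) := by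
            simp only [hg, hφ]
            rw [max_eq_left (by linarith), min_eq_left (by simp only [hc]; linarith)]
          have hsupp : ∀ y, P x y ≠ 0 → L ≤ Z y := by
            intro y hy
            have h2 := abs_le.mp (hC2 x y hy)
            linarith [h2.1, h2.2]
          have hE1 : (∑' y, P x y * g y) ≤ ∑' y, P x y * ENNReal.ofReal (Z y - L) := by
            apply ENNReal.tsum_le_tsum
            intro y
            apply mul_le_mul_right
            simp only [hg, hφ]
            rcases le_total (Z y - L) 0 with h | h
            · rw [max_eq_right h, min_eq_left hc0]
              simp
            · rw [max_eq_left h]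
              exact ENNReal.ofReal_le_ofReal (min_le_left _ _)
          have hds := drift_shift (P x) (hP x) Z hZ0 L η (Z x) hsupp
            (by linarith) (hZ0 x) (hC1 x hκx)
          have hcred : x ∉ {x : X | (L - D < Z x ∧ Z x ≤ L + D) ∨ L + D + n < Z x} := by
            intro hx
            rcases hx with h | h
            · linarith [h.2]
            · linarith
          rw [Set.indicator_of_mem (show x ∈ {x : X | L + D < Z x ∧ Z x ≤ L + D + n}
              from ⟨hxa, hxb⟩),
            Set.indicator_of_notMem hcred, hgx, add_zero]
          exact le_trans (add_le_add_left hE1 _) hds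
        · have hx2' : L + D < Z x → L + D + n < Z x := by
            intro h
            by_contra hcon
            push_neg at hcon
            exact hx2 ⟨h, hcon⟩
          have hcred : x ∈ {x : X | (L - D < Z x ∧ Z x ≤ L + D) ∨ L + D + n < Z x} := by
            rcases le_or_gt (Z x) (L + D) with h | h
            · exact Or.inl ⟨hx1, h⟩
            · exact Or.inr (hx2' h)
          rw [Set.indicator_of_notMem hx2, Set.indicator_of_mem hcred, add_zero]
          calc (∑' y, P x y * g y)
              ≤ ∑' y, P x y * ENNReal.ofReal (φ (Z x) + D) := by
                apply ENNReal.tsum_le_tsum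
                intro y
                by_cases hy : P x y = 0
                · simp [hy]
                · exact mul_le_mul_right
                    (ENNReal.ofReal_le_ofReal (phi_lip L c _ _ hc0 (hC2 x y hy))) _
            _ = (∑' y, P x y) * ENNReal.ofReal (φ (Z x) + D) := ENNReal.tsum_mul_right
            _ = g x + ENNReal.ofReal D := by
                rw [hP x, one_mul, ENNReal.ofReal_add (hφ0 _) hD.le]
    -- sum against pd
    have hstat := stat_id P pd hpd2 g
    have hSfin : (∑' x, pd x * g x) ≠ ⊤ := by
      apply ne_top_of_le_ne_top (show ENNReal.ofReal c ≠ ⊤ from ENNReal.ofReal_ne_top)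
      calc (∑' x, pd x * g x) ≤ ∑' x, pd x * ENNReal.ofReal c :=
            ENNReal.tsum_le_tsum fun x =>
              mul_le_mul_right (ENNReal.ofReal_le_ofReal (hφc _)) _
        _ = 1 * ENNReal.ofReal c := by rw [ENNReal.tsum_mul_right, hpd1]
        _ = ENNReal.ofReal c := one_mul _
    have big := ENNReal.tsum_le_tsum fun x => mul_le_mul_right (pointwise x) (pd x)
    have emid : (∑' x, pd x * Set.indicator {x | L + D < Z x ∧ Z x ≤ L + D + n}
          (fun _ => ENNReal.ofReal η) x) = ENNReal.ofReal η * M := by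
      rw [hM, ← ENNReal.tsum_mul_left]
      exact tsum_congr fun x => ind_mul _ pd _ x
    have lhs_eq : (∑' x, pd x * ((∑' y, P x y * g y)
          + Set.indicator {x | L + D < Z x ∧ Z x ≤ L + D + n} (fun _ => ENNReal.ofReal η) x))
        = (∑' x, pd x * g x) + ENNReal.ofReal η * M := by
      simp_rw [mul_add]
      rw [ENNReal.tsum_add, hstat, emid]
    have rhs_eq : (∑' x, pd x * (g x
          + Set.indicator {x | (L - D < Z x ∧ Z x ≤ L + D) ∨ L + D + n < Z x}
              (fun _ => ENNReal.ofReal D) x))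
        = (∑' x, pd x * g x) + (ENNReal.ofReal D * B + ENNReal.ofReal D * Tt) := by
      have e1 : ∀ x : X,
          pd x * Set.indicator {x : X | (L - D < Z x ∧ Z x ≤ L + D) ∨ L + D + n < Z x}
            (fun _ => ENNReal.ofReal D) x
          = ENNReal.ofReal D * (Set.indicator {x : X | L - D < Z x ∧ Z x ≤ L + D} pd x
              + Set.indicator {x : X | L + D + n < Z x} pd x) := by
        intro x
        rw [ind_mul]
        congr 1
        by_cases h1 : L - D < Z x ∧ Z x ≤ L + D <;> by_cases h2 : L + D + n < Z x
        · exact absurd h2 (by push_neg; linarith [h1.2])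
        · rw [Set.indicator_of_mem
              (show x ∈ {x : X | (L - D < Z x ∧ Z x ≤ L + D) ∨ L + D + n < Z x} from Or.inl h1) pd,
            Set.indicator_of_mem
              (show x ∈ {x : X | L - D < Z x ∧ Z x ≤ L + D} from h1) pd,
            Set.indicator_of_notMem
              (show x ∉ {x : X | L + D + n < Z x} from h2) pd, add_zero]
        · rw [Set.indicator_of_mem
              (show x ∈ {x : X | (L - D < Z x ∧ Z x ≤ L + D) ∨ L + D + n < Z x} from Or.inr h2) pd,
            Set.indicator_of_notMem
              (show x ∉ {x : X | L - D < Z x ∧ Z x ≤ L + D} from h1) pd,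
            Set.indicator_of_mem
              (show x ∈ {x : X | L + D + n < Z x} from h2) pd, zero_add]
        · rw [Set.indicator_of_notMem
              (show x ∉ {x : X | (L - D < Z x ∧ Z x ≤ L + D) ∨ L + D + n < Z x} from
                fun hx => hx.elim h1 h2) pd,
            Set.indicator_of_notMem
              (show x ∉ {x : X | L - D < Z x ∧ Z x ≤ L + D} from h1) pd,
            Set.indicator_of_notMem
              (show x ∉ {x : X | L + D + n < Z x} from h2) pd, add_zero]
      simp_rw [mul_add]
      rw [ENNReal.tsum_add, tsum_congr e1, ENNReal.tsum_mul_left, ENNReal.tsum_add,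
        ← hBdef, ← hTt, mul_add]
    rw [lhs_eq, rhs_eq] at big
    have hsum2 : ENNReal.ofReal η * M ≤ ENNReal.ofReal D * B + ENNReal.ofReal D * Tt :=
      (ENNReal.add_le_add_iff_left hSfin).mp big
    have hT_split : T = M + Tt := by
      rw [hTdef, hM, hTt, ← ENNReal.tsum_add]
      apply tsum_congr
      intro x
      have hn0 : (0:ℝ) ≤ n := Nat.cast_nonneg n
      rcases lt_or_ge (L + D) (Z x) with h1 | h1
      · rcases le_or_gt (Z x) (L + D + n) with h2 | h2
        · rw [Set.indicator_of_mem (show x ∈ {x : X | L + D < Z x} from h1) pd,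
            Set.indicator_of_mem
              (show x ∈ {x : X | L + D < Z x ∧ Z x ≤ L + D + n} from ⟨h1, h2⟩) pd,
            Set.indicator_of_notMem
              (show x ∉ {x : X | L + D + n < Z x} from not_lt.mpr h2) pd, add_zero]
        · rw [Set.indicator_of_mem (show x ∈ {x : X | L + D < Z x} from h1) pd,
            Set.indicator_of_notMem
              (show x ∉ {x : X | L + D < Z x ∧ Z x ≤ L + D + n} from
                fun hx => absurd hx.2 (not_le.mpr h2)) pd,
            Set.indicator_of_mem (show x ∈ {x : X | L + D + n < Z x} from h2) pd, zero_add]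
      · rw [Set.indicator_of_notMem (show x ∉ {x : X | L + D < Z x} from not_lt.mpr h1) pd,
          Set.indicator_of_notMem
            (show x ∉ {x : X | L + D < Z x ∧ Z x ≤ L + D + n} from
              fun hx => absurd hx.1 (not_lt.mpr h1)) pd,
          Set.indicator_of_notMem
            (show x ∉ {x : X | L + D + n < Z x} from
              fun hx => absurd (show (L + D + (n:ℝ)) < Z x from hx)
                (not_lt.mpr (by linarith))) pd, add_zero]
    calc ENNReal.ofReal η * T = ENNReal.ofReal η * M + ENNReal.ofReal η * Tt := by
          rw [hT_split, mul_add]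
      _ ≤ (ENNReal.ofReal D * B + ENNReal.ofReal D * Tt) + ENNReal.ofReal η * Tt :=
          add_le_add_left hsum2 _
      _ = ENNReal.ofReal D * B + (ENNReal.ofReal D + ENNReal.ofReal η) * Tt := by ring
      _ = ENNReal.ofReal D * B + ENNReal.ofReal (D + η) * Tt := by
          rw [ENNReal.ofReal_add hD.le hη.le]
  -- tails are small
  have hsmall : ∀ ε : ℝ≥0∞, 0 < ε →
      ∃ n : ℕ, (∑' x, Set.indicator {x | L + D + n < Z x} pd x) < ε := by
    intro ε hε
    have htail := ENNReal.tendsto_tsum_compl_atTop_zero (f := pd) (by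
      rw [hpd1]; exact ENNReal.one_ne_top)
    obtain ⟨F, hF⟩ := (htail.eventually (gt_mem_nhds hε)).exists
    obtain ⟨r, hr⟩ := (F.image Z).exists_le
    obtain ⟨n, hn⟩ := exists_nat_ge (r - L - D)
    refine ⟨n, lt_of_le_of_lt ?_ hF⟩
    calc (∑' x, Set.indicator {x | L + D + n < Z x} pd x)
        ≤ ∑' x, Set.indicator {x : X | x ∉ F} pd x := by
          apply ENNReal.tsum_le_tsum
          intro x
          apply Set.indicator_le_indicator_of_subset
          · intro x hx
            simp only [Set.mem_setOf_eq] at hx ⊢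
            intro hxF
            have : Z x ≤ r := hr (Z x) (Finset.mem_image_of_mem Z hxF)
            linarith
          · exact fun a => zero_le
      _ = ∑' (b : {x // x ∉ F}), pd b := (tsum_subtype {x : X | x ∉ F} pd).symm
  -- conclude by letting n → ∞
  apply ENNReal.le_of_forall_pos_le_add
  intro ε hε hBfin
  have hε' : 0 < (ε : ℝ≥0∞) / ENNReal.ofReal (D + η) :=
    ENNReal.div_pos (by exact_mod_cast hε.ne') ENNReal.ofReal_ne_top
  obtain ⟨n, hn⟩ := hsmall _ hε'
  calc ENNReal.ofReal η * T
      ≤ ENNReal.ofReal D * B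
        + ENNReal.ofReal (D + η) * (∑' x, Set.indicator {x | L + D + n < Z x} pd x) := main n
    _ ≤ ENNReal.ofReal D * B
        + ENNReal.ofReal (D + η) * ((ε : ℝ≥0∞) / ENNReal.ofReal (D + η)) :=
        add_le_add_right (mul_le_mul_right hn.le _) _
    _ ≤ ENNReal.ofReal D * B + ε := add_le_add_right ENNReal.mul_div_le _

/-- Lemma 2.3, first part: geometric tail bound for the stationary
distribution of a Markov chain from drift conditions (C1) and (C2).  Condition (C1) is
stated as `E[Z(next)] + η ≤ Z(x)` (in `ℝ≥0∞`), which is exactly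
`E[Z(next)] − Z(x) ≤ −η` with a finite expectation. -/
theorem stationary_geometric_tail_bound
    {X : Type*} [Countable X]
    (P : X → X → ℝ≥0∞) (hP : ∀ x, (∑' y, P x y) = 1)
    (Z : X → ℝ) (hZ0 : ∀ x, 0 ≤ Z x)
    (η κ D : ℝ) (hη : 0 < η) (hD : 0 ≤ D)
    (hC1 : ∀ x, κ ≤ Z x →
      (∑' y, P x y * ENNReal.ofReal (Z y)) + ENNReal.ofReal η ≤ ENNReal.ofReal (Z x))
    (hC2 : ∀ x y, P x y ≠ 0 → |Z y - Z x| ≤ D)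
    (pd : X → ℝ≥0∞) (hpd1 : (∑' x, pd x) = 1)
    (hpd2 : ∀ y, (∑' x, pd x * P x y) = pd y)
    (m : ℕ) :
    (∑' x : {x : X // κ + 2 * D * m < Z x}, pd x.1) ≤
      ENNReal.ofReal ((D / (D + η)) ^ (m + 1)) := by
  classical
  rcases eq_or_lt_of_le hD with hD0 | hDpos
  · -- degenerate case D = 0 : the tail set is empty
    have hempty : ∀ x : X, ¬ (κ + 2 * D * m < Z x) := by
      intro x hx
      have hκx : κ < Z x := by nlinarith [hx, hD0]
      have h1 := hC1 x hκx.le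
      have h2 : (∑' y, P x y * ENNReal.ofReal (Z y)) = ENNReal.ofReal (Z x) := by
        have e : ∀ y, P x y * ENNReal.ofReal (Z y) = P x y * ENNReal.ofReal (Z x) := by
          intro y
          by_cases hy : P x y = 0
          · simp [hy]
          · have h3 := abs_le.mp (hC2 x y hy)
            have : Z y = Z x := by rw [← hD0] at h3; linarith [h3.1, h3.2]
            rw [this]
        rw [tsum_congr e, ENNReal.tsum_mul_right, hP x, one_mul]
      rw [h2] at h1
      nth_rewrite 2 [← add_zero (ENNReal.ofReal (Z x))] at h1
      have h4 := (ENNReal.add_le_add_iff_left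
        (show ENNReal.ofReal (Z x) ≠ ⊤ from ENNReal.ofReal_ne_top)).mp h1
      have h5 : ENNReal.ofReal η = 0 := le_antisymm h4 zero_le
      rw [ENNReal.ofReal_eq_zero] at h5
      linarith
    haveI : IsEmpty {x : X // κ + 2 * D * m < Z x} := ⟨fun x => hempty x.1 x.2⟩
    rw [tsum_empty]
    exact zero_le
  · -- main case D > 0
    have hDη0 : ENNReal.ofReal (D + η) ≠ 0 := by
      rw [Ne, ENNReal.ofReal_eq_zero]
      push_neg
      linarith
    have hDηR : D + η ≠ 0 := by positivity
    have key : ∀ L : ℝ, κ - D ≤ L →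
        ENNReal.ofReal (D + η) * (∑' x, Set.indicator {x | L + D < Z x} pd x)
          ≤ ENNReal.ofReal D * (∑' x, Set.indicator {x | L - D < Z x} pd x) := by
      intro L hL
      have h1 := key_ineq P hP Z hZ0 η κ D hη hDpos hC1 hC2 pd hpd1 hpd2 L hL
      have hsplit : (∑' x, Set.indicator {x | L - D < Z x} pd x)
          = (∑' x, Set.indicator {x | L + D < Z x} pd x)
            + (∑' x, Set.indicator {x | L - D < Z x ∧ Z x ≤ L + D} pd x) := by
        rw [← ENNReal.tsum_add]
        apply tsum_congr
        intro x
        rcases lt_or_ge (L + D) (Z x) with h1 | h1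
        · rw [Set.indicator_of_mem (show x ∈ {x : X | L - D < Z x} from by
              simp only [Set.mem_setOf_eq]; linarith) pd,
            Set.indicator_of_mem (show x ∈ {x : X | L + D < Z x} from h1) pd,
            Set.indicator_of_notMem (show x ∉ {x : X | L - D < Z x ∧ Z x ≤ L + D} from
              fun hx => absurd hx.2 (not_le.mpr h1)) pd, add_zero]
        · rcases lt_or_ge (L - D) (Z x) with h2 | h2
          · rw [Set.indicator_of_mem (show x ∈ {x : X | L - D < Z x} from h2) pd,
              Set.indicator_of_notMem (show x ∉ {x : X | L + D < Z x} from not_lt.mpr h1) pd,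
              Set.indicator_of_mem (show x ∈ {x : X | L - D < Z x ∧ Z x ≤ L + D} from
                ⟨h2, h1⟩) pd, zero_add]
          · rw [Set.indicator_of_notMem (show x ∉ {x : X | L - D < Z x} from
                not_lt.mpr h2) pd,
              Set.indicator_of_notMem (show x ∉ {x : X | L + D < Z x} from
                not_lt.mpr h1) pd,
              Set.indicator_of_notMem (show x ∉ {x : X | L - D < Z x ∧ Z x ≤ L + D} from
                fun hx => absurd hx.1 (not_lt.mpr h2)) pd, add_zero]
      calc ENNReal.ofReal (D + η) * (∑' x, Set.indicator {x | L + D < Z x} pd x)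
          = (ENNReal.ofReal D + ENNReal.ofReal η)
              * (∑' x, Set.indicator {x | L + D < Z x} pd x) := by
            rw [ENNReal.ofReal_add hDpos.le hη.le]
        _ = ENNReal.ofReal D * (∑' x, Set.indicator {x | L + D < Z x} pd x)
              + ENNReal.ofReal η * (∑' x, Set.indicator {x | L + D < Z x} pd x) :=
            add_mul _ _ _
        _ ≤ ENNReal.ofReal D * (∑' x, Set.indicator {x | L + D < Z x} pd x)
              + ENNReal.ofReal D * (∑' x, Set.indicator {x | L - D < Z x ∧ Z x ≤ L + D} pd x) :=
            add_le_add_right h1 _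
        _ = ENNReal.ofReal D * ((∑' x, Set.indicator {x | L + D < Z x} pd x)
              + (∑' x, Set.indicator {x | L - D < Z x ∧ Z x ≤ L + D} pd x)) := (mul_add _ _ _).symm
        _ = ENNReal.ofReal D * (∑' x, Set.indicator {x | L - D < Z x} pd x) := by rw [← hsplit]
    have hTle1 : ∀ s : Set X, (∑' x, Set.indicator s pd x) ≤ 1 := by
      intro s
      rw [← hpd1]
      exact ENNReal.tsum_le_tsum fun x => Set.indicator_le_self s pd x
    have hind : ∀ k : ℕ, (∑' x, Set.indicator {x | κ + 2 * D * k < Z x} pd x)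
        ≤ ENNReal.ofReal ((D / (D + η)) ^ (k + 1)) := by
      intro k
      induction k with
      | zero =>
        have h := key (κ - D) le_rfl
        have e1 : κ - D + D = κ := by ring
        rw [e1] at h
        have h2 : ENNReal.ofReal (D + η) * (∑' x, Set.indicator {x | κ < Z x} pd x)
            ≤ ENNReal.ofReal D := by
          refine le_trans h ?_
          calc ENNReal.ofReal D * (∑' x, Set.indicator {x | κ - D - D < Z x} pd x)
              ≤ ENNReal.ofReal D * 1 := mul_le_mul_right (hTle1 _) _
            _ = ENNReal.ofReal D := mul_one _
        have e2 : κ + 2 * D * ((0:ℕ):ℝ) = κ := by norm_num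
        rw [show ({x : X | κ + 2 * D * ((0:ℕ):ℝ) < Z x}) = {x : X | κ < Z x} by rw [e2]]
        rw [← ENNReal.mul_le_mul_iff_right hDη0 ENNReal.ofReal_ne_top]
        refine le_trans h2 (le_of_eq ?_)
        rw [← ENNReal.ofReal_mul (by linarith)]
        congr 1
        rw [zero_add, pow_one, mul_div_cancel₀ D hDηR]
      | succ k ih =>
        have hLk : κ - D ≤ κ + 2 * D * k + D := by
          have : (0:ℝ) ≤ (k:ℝ) := Nat.cast_nonneg k
          nlinarith
        have h := key (κ + 2 * D * k + D) hLk
        have e1 : κ + 2 * D * (k:ℝ) + D + D = κ + 2 * D * ((k:ℝ) + 1) := by ring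
        have e2 : κ + 2 * D * (k:ℝ) + D - D = κ + 2 * D * (k:ℝ) := by ring
        rw [e1, e2] at h
        have hcast : ((k+1:ℕ):ℝ) = (k:ℝ) + 1 := by push_cast; ring
        rw [show ({x : X | κ + 2 * D * ((k+1:ℕ):ℝ) < Z x})
            = {x : X | κ + 2 * D * ((k:ℝ) + 1) < Z x} by rw [hcast]]
        rw [← ENNReal.mul_le_mul_iff_right hDη0 ENNReal.ofReal_ne_top]
        refine le_trans h ?_
        calc ENNReal.ofReal D * (∑' x, Set.indicator {x | κ + 2 * D * (k:ℝ) < Z x} pd x)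
            ≤ ENNReal.ofReal D * ENNReal.ofReal ((D / (D + η)) ^ (k + 1)) :=
              mul_le_mul_right ih _
          _ = ENNReal.ofReal (D * (D / (D + η)) ^ (k + 1)) := by
              rw [ENNReal.ofReal_mul hDpos.le]
          _ = ENNReal.ofReal ((D + η) * (D / (D + η)) ^ (k + 1 + 1)) := by
              congr 1
              rw [pow_succ _ (k + 1), mul_left_comm, mul_div_cancel₀ D hDηR, mul_comm]
          _ = ENNReal.ofReal (D + η) * ENNReal.ofReal ((D / (D + η)) ^ (k + 1 + 1)) := by
              rw [ENNReal.ofReal_mul (by linarith)]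
    calc (∑' x : {x : X // κ + 2 * D * m < Z x}, pd x.1)
        = ∑' x, Set.indicator {x : X | κ + 2 * D * m < Z x} pd x :=
          tsum_subtype {x : X | κ + 2 * D * (m:ℝ) < Z x} pd
      _ ≤ ENNReal.ofReal ((D / (D + η)) ^ (m + 1)) := hind m
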